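/- Let K be a positive integer and set p_L = 1/(100·K) and p_U = 1 − 1/(100·K). Let s and s̃ be integers with 0 ≤ s, 0 ≤ s̃ ≤ K, and s̃ > s. Then p_U·s̃ > p_L·K + (1 − p_L)·s. -/

import Mathlib

/-- Key inequality in the NP-hardness reduction from MAX 3SAT. -/
theorem stmt13 (K : ℕ) (hK : 0 < K)
    (s st : ℤ) (hs : 0 ≤ s) (hst0 : 0 ≤ st) (hstK : st ≤ (K : ℤ)) (hgt : s < st) :
    (1 - 1 / (100 * (K : ℝ))) * (st : ℝ) >
      (1 / (100 * (K : ℝ))) * (K : ℝ) + (1 - 1 / (100 * (K : ℝ))) * (s : ℝ) := by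
  have hK' : (1 : ℝ) ≤ (K : ℝ) := by exact_mod_cast hK
  have hKpos : (0 : ℝ) < 100 * (K : ℝ) := by linarith
  have h1 : (s : ℝ) + 1 ≤ (st : ℝ) := by exact_mod_cast hgt
  have hs' : (0 : ℝ) ≤ (s : ℝ) := by exact_mod_cast hs
  have hε : (1 : ℝ) / (100 * (K : ℝ)) = 1 / (100 * (K : ℝ)) := rfl
  have hεK : (1 / (100 * (K : ℝ))) * (K : ℝ) = 1 / 100 := by
    field_simp
  have hεle : 1 / (100 * (K : ℝ)) ≤ 1 / 100 := by
    apply div_le_div_of_nonneg_left (by norm_num) (by norm_num) ?_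
    linarith
  rw [hεK]
  nlinarith [hεle, h1, hs']
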